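/- arXiv:0908.0141 — 4 statements merged into one kernel-verified Lean document; each statement's English description precedes it below -/
import Mathlib

section
/- The tower number 𝔱 is at most the bounding number 𝔟 (Rothberger): 𝔱 ≤ 𝔟. -/
/-- `A ⊆* B`: `A \ B` is finite. -/
def AlmostSubset (A B : Set ℕ) : Prop := (A \ B).Finite

/-- `f ≤* g`: eventual domination. -/
def EventuallyLE (f g : ℕ → ℕ) : Prop := ∀ᶠ n in Filter.atTop, f n ≤ g n

/-- A family of functions is unbounded w.r.t. `≤*`. -/
def UnboundedFam (B : Set (ℕ → ℕ)) : Prop := ¬ ∃ g : ℕ → ℕ, ∀ f ∈ B, EventuallyLE f g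

/-- The bounding number `𝔟`. -/
noncomputable def bNumber : Cardinal :=
  sInf { c | ∃ B : Set (ℕ → ℕ), UnboundedFam B ∧ Cardinal.mk B = c }

/-- `A` is an (infinite) pseudointersection of the family `F`. -/
def Pseudointersection (A : Set ℕ) (F : Set (Set ℕ)) : Prop :=
  A.Infinite ∧ ∀ B ∈ F, (A \ B).Finite

/-- The pseudointersection number `𝔭`. -/
noncomputable def pNumber : Cardinal :=
  sInf { c | ∃ F : Set (Set ℕ), (∀ B ∈ F, B.Infinite) ∧
    (∀ B ∈ F, ∀ C ∈ F, B ∩ C ∈ F) ∧ (¬ ∃ A, Pseudointersection A F) ∧ Cardinal.mk F = c }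

/-- A tower: a set of infinite subsets of ℕ which can be enumerated along a
well-order so as to be `⊆*`-decreasing. -/
def IsTower (T : Set (Set ℕ)) : Prop :=
  (∀ x ∈ T, x.Infinite) ∧
  ∃ (I : Type) (r : I → I → Prop), IsWellOrder I r ∧
    ∃ e : I ≃ T, ∀ i j : I, r i j → AlmostSubset (e j).1 (e i).1

/-- The tower number `𝔱`. -/
noncomputable def tNumber : Cardinal :=
  sInf { c | ∃ T : Set (Set ℕ), IsTower T ∧ (¬ ∃ A, Pseudointersection A T) ∧ Cardinal.mk T = c }

/-- The increasing enumeration of a subset of ℕ. -/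
noncomputable def enumOf (x : Set ℕ) : ℕ → ℕ := Nat.nth (· ∈ x)

/-- An unbounded tower: the increasing enumerations form a `≤*`-unbounded family. -/
def UnboundedTower (T : Set (Set ℕ)) : Prop := IsTower T ∧ UnboundedFam (enumOf '' T)

-- auxiliary lemmas
attribute [local instance] Classical.propDecidable

lemma setOf_mem_infinite {S : Set ℕ} (h : S.Infinite) : {n | (· ∈ S) n}.Infinite := h

lemma enum_subset_le {S U : Set ℕ} (hS : S.Infinite) (hsub : S ⊆ U) (n : ℕ) :
    enumOf U n ≤ enumOf S n := by
  have hU : U.Infinite := hS.mono hsub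
  have h1 : Nat.count (· ∈ S) (Nat.nth (· ∈ S) n + 1) = n + 1 := by
    rw [Nat.count_succ, Nat.count_nth_of_infinite (p := (· ∈ S)) hS, if_pos (Nat.nth_mem_of_infinite (p := (· ∈ S)) hS n)]
  have h2 : n < Nat.count (· ∈ U) (Nat.nth (· ∈ S) n + 1) := by
    have := Nat.count_mono_left (p := (· ∈ S)) (q := (· ∈ U)) (n := Nat.nth (· ∈ S) n + 1) (fun k _ hk => hsub hk)
    omega
  have := (Nat.lt_nth_iff_count_lt (p := (· ∈ U)) hU).mp h2
  simpa [enumOf, Nat.lt_succ_iff] using this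

lemma count_diff_le (A T : Set ℕ) (hf : (A \ T).Finite) (m : ℕ) :
    Nat.count (· ∈ A) m ≤ Nat.count (· ∈ A ∩ T) m + hf.toFinset.card := by
  classical
  rw [Nat.count_eq_card_filter_range, Nat.count_eq_card_filter_range]
  have hsub : ({x ∈ Finset.range m | x ∈ A}) ⊆ {x ∈ Finset.range m | x ∈ A ∩ T} ∪ hf.toFinset := by
    intro x hx
    simp only [Finset.mem_filter, Finset.mem_union, Set.Finite.mem_toFinset, Set.mem_inter_iff,
      Set.mem_diff] at *
    tauto
  calc _ ≤ _ := Finset.card_le_card hsub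
  _ ≤ _ := Finset.card_union_le _ _

lemma enum_shift {A T : Set ℕ} (hA : A.Infinite) (hf : (A \ T).Finite) (n : ℕ) :
    enumOf (A ∩ T) n ≤ enumOf A (n + hf.toFinset.card) := by
  have hAT : (A ∩ T).Infinite := by
    have := hA.diff hf
    rwa [Set.diff_diff_right_self] at this
  set k := hf.toFinset.card with hk
  have h1 : Nat.count (· ∈ A) (Nat.nth (· ∈ A) (n + k) + 1) = n + k + 1 := by
    rw [Nat.count_succ, Nat.count_nth_of_infinite (p := (· ∈ A)) hA, if_pos (Nat.nth_mem_of_infinite (p := (· ∈ A)) hA _)]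
  have h2 : n < Nat.count (· ∈ A ∩ T) (Nat.nth (· ∈ A) (n + k) + 1) := by
    have := count_diff_le A T hf (Nat.nth (· ∈ A) (n + k) + 1)
    omega
  have := (Nat.lt_nth_iff_count_lt (p := (· ∈ A ∩ T)) hAT).mp h2
  simpa [enumOf, Nat.lt_succ_iff] using this

lemma exists_thin (A : Set ℕ) (hA : A.Infinite) (f : ℕ → ℕ) :
    ∃ Y : Set ℕ, Y.Infinite ∧ Y ⊆ A ∧ ∀ n, f n ≤ enumOf Y n := by
  choose F hF1 hF2 using fun a => hA.exists_gt a
  let g : ℕ → ℕ := fun n => Nat.rec (F (f 0)) (fun m gm => F (max gm (f (m + 1)))) n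
  have hg0 : ∀ n, g n ∈ A := by intro n; cases n <;> exact hF1 _
  have hgmono : StrictMono g :=
    strictMono_nat_of_lt_succ fun n => lt_of_le_of_lt (le_max_left _ _) (hF2 _)
  have hgf : ∀ n, f n ≤ g n := by
    intro n
    cases n with
    | zero => exact (hF2 _).le
    | succ m => exact le_trans (le_max_right _ _) (hF2 _).le
  refine ⟨Set.range g, Set.infinite_range_of_injective hgmono.injective, ?_, ?_⟩
  · rintro _ ⟨n, rfl⟩; exact hg0 n
  · intro n
    have hc : Nat.count (· ∈ Set.range g) (g n) = n := by
      rw [Nat.count_eq_card_filter_range]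
      have he : ({x ∈ Finset.range (g n) | x ∈ Set.range g}) = (Finset.range n).image g := by
        ext x
        simp only [Finset.mem_filter, Finset.mem_range, Finset.mem_image, Set.mem_range]
        constructor
        · rintro ⟨hlt, m, rfl⟩; exact ⟨m, hgmono.lt_iff_lt.mp hlt, rfl⟩
        · rintro ⟨m, hm, rfl⟩; exact ⟨hgmono hm, m, rfl⟩
      rw [he, Finset.card_image_of_injective _ hgmono.injective, Finset.card_range]
    have he2 : enumOf (Set.range g) n = g n := by
      have := Nat.nth_count (p := (· ∈ Set.range g)) (n := g n) ⟨n, rfl⟩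
      rw [hc] at this
      exact this
    rw [he2]; exact hgf n

lemma isTower_range {ι : Type} (r : ι → ι → Prop) [hwo : IsWellOrder ι r] (t : ι → Set ℕ)
    (hinf : ∀ i, (t i).Infinite)
    (hdec : ∀ i j, r i j → (t j \ t i).Finite) : IsTower (Set.range t) := by
  constructor
  · rintro x ⟨i, rfl⟩; exact hinf i
  · classical
    have hne : ∀ s : ↥(Set.range t), {i | t i = s.1}.Nonempty := by
      rintro ⟨_, i, rfl⟩; exact ⟨i, rfl⟩
    have wf : WellFounded r := hwo.wf
    let m : ↥(Set.range t) → ι := fun s => wf.min {i | t i = s.1} (hne s)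
    have hm : ∀ s, t (m s) = s.1 := fun s => wf.min_mem _ (hne s)
    have hminj : Function.Injective m := by
      intro s s' h
      apply Subtype.ext
      rw [← hm s, ← hm s', h]
    let r' : ↥(Set.range t) → ↥(Set.range t) → Prop := fun s s' => r (m s) (m s')
    have hwo' : IsWellOrder _ r' := RelEmbedding.isWellOrder ⟨⟨m, hminj⟩, Iff.rfl⟩
    refine ⟨↥(Set.range t), r', hwo', Equiv.refl _, fun i j hij => ?_⟩
    have := hdec (m i) (m j) hij
    unfold AlmostSubset
    rwa [hm i, hm j] at this


section Main

variable (B : Set (ℕ → ℕ))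

/-- The transfinite recursion: at each step pick (if possible) an infinite set almost
contained in all previous ones whose enumeration eventually dominates the current function. -/
noncomputable def TS : ↥B → Set ℕ :=
  (IsWellFounded.wf (r := (WellOrderingRel : ↥B → ↥B → Prop))).fix
    (fun b ih => Classical.epsilon (fun X : Set ℕ =>
      X.Infinite ∧ (∀ b' (h : WellOrderingRel b' b), (X \ ih b' h).Finite) ∧
      ∀ᶠ n in Filter.atTop, (b : ℕ → ℕ) n ≤ enumOf X n))

/-- The property we try to satisfy at step `b`. -/
def ExtP (b : ↥B) (X : Set ℕ) : Prop :=
  X.Infinite ∧ (∀ b' (_ : WellOrderingRel b' b), (X \ TS B b').Finite) ∧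
    ∀ᶠ n in Filter.atTop, (b : ℕ → ℕ) n ≤ enumOf X n

lemma TS_eq (b : ↥B) : TS B b = Classical.epsilon (ExtP B b) :=
  WellFounded.fix_eq _ _ b

lemma good_of_ext (b : ↥B) (h : ∃ X, ExtP B b X) : ExtP B b (TS B b) := by
  rw [TS_eq]; exact Classical.epsilon_spec h

lemma aux_main (hB : UnboundedFam B) : tNumber ≤ Cardinal.mk B := by
  by_cases hgood : ∀ b : ↥B, ∃ X, ExtP B b X
  · -- every step succeeded: the whole range is a tower without pseudointersection
    have hGood : ∀ b, ExtP B b (TS B b) := fun b => good_of_ext B b (hgood b)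
    have hT : IsTower (Set.range (TS B)) :=
      isTower_range WellOrderingRel (TS B) (fun b => (hGood b).1)
        (fun i j h => (hGood j).2.1 i h)
    have hnop : ¬ ∃ A, Pseudointersection A (Set.range (TS B)) := by
      rintro ⟨A, hAinf, hAsub⟩
      apply hB
      refine ⟨fun n => enumOf A (n + n), ?_⟩
      intro f hf
      set b : ↥B := ⟨f, hf⟩ with hb
      have h1 := (hGood b).2.2
      have hfin : (A \ TS B b).Finite := hAsub _ ⟨b, rfl⟩
      set k := hfin.toFinset.card with hk
      have hInt : (A ∩ TS B b).Infinite := by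
        have := hAinf.diff hfin
        rwa [Set.diff_diff_right_self] at this
      have key : ∀ n, k ≤ n → enumOf (TS B b) n ≤ enumOf A (n + n) := by
        intro n hn
        calc enumOf (TS B b) n ≤ enumOf (A ∩ TS B b) n :=
              enum_subset_le hInt Set.inter_subset_right n
        _ ≤ enumOf A (n + k) := enum_shift hAinf hfin n
        _ ≤ enumOf A (n + n) := Nat.nth_monotone hAinf (by omega)
      filter_upwards [h1, Filter.eventually_ge_atTop k] with n h1n hkn
      exact le_trans h1n (key n hkn)
    calc tNumber ≤ Cardinal.mk ↥(Set.range (TS B)) := csInf_le' ⟨_, hT, hnop, rfl⟩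
    _ ≤ Cardinal.mk B := Cardinal.mk_range_le
  · -- some step failed: below the minimal failure we have a tower without pseudointersection
    push_neg at hgood
    obtain ⟨b₀, hbad, hmin⟩ := (IsWellFounded.wf
      (r := (WellOrderingRel : ↥B → ↥B → Prop))).has_min
      {b : ↥B | ¬ ∃ X, ExtP B b X} (by obtain ⟨b, hb⟩ := hgood; exact ⟨b, fun ⟨X, hX⟩ => hb X hX⟩)
    have hpred : ∀ b' : ↥B, WellOrderingRel b' b₀ → ExtP B b' (TS B b') := by
      intro b' h
      refine good_of_ext B b' ?_
      by_contra hc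
      exact hmin b' hc h
    set S : Set ↥B := {b' | WellOrderingRel b' b₀} with hS
    have hwo : IsWellOrder ↥S (fun x y : ↥S => WellOrderingRel x.1 y.1) :=
      RelEmbedding.isWellOrder ⟨⟨Subtype.val, Subtype.val_injective⟩, Iff.rfl⟩
    set t : ↥S → Set ℕ := fun x => TS B x.1 with ht
    have hT : IsTower (Set.range t) :=
      isTower_range (fun x y : ↥S => WellOrderingRel x.1 y.1) t
        (fun x => (hpred x.1 x.2).1) (fun x y h => (hpred y.1 y.2).2.1 x.1 h)
    have hnop : ¬ ∃ A, Pseudointersection A (Set.range t) := by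
      rintro ⟨A, hAinf, hAsub⟩
      apply hbad
      obtain ⟨Y, hYinf, hYsub, hYdom⟩ := exists_thin A hAinf b₀.1
      refine ⟨Y, hYinf, ?_, Filter.Eventually.of_forall hYdom⟩
      intro b' h
      have hfin : (A \ TS B b').Finite := hAsub _ ⟨⟨b', h⟩, rfl⟩
      exact hfin.subset (fun x hx => ⟨hYsub hx.1, hx.2⟩)
    calc tNumber ≤ Cardinal.mk ↥(Set.range t) := csInf_le' ⟨_, hT, hnop, rfl⟩
    _ ≤ Cardinal.mk ↥S := Cardinal.mk_range_le
    _ ≤ Cardinal.mk B := Cardinal.mk_set_le S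

end Main

/-- Rothberger: `𝔱 ≤ 𝔟`. -/
theorem tNumber_le_bNumber : tNumber ≤ bNumber := by
  apply le_csInf
  · refine ⟨Cardinal.mk ↥(Set.univ : Set (ℕ → ℕ)), Set.univ, ?_, rfl⟩
    rintro ⟨g, hg⟩
    obtain ⟨n, hn⟩ := (hg (fun n => g n + 1) (Set.mem_univ _)).exists
    simp only at hn
    omega
  · rintro c ⟨Bf, hBf, rfl⟩
    exact aux_main Bf hBf
end

section
/- A topological space X satisfies S₁(Ω,Γ) if and only if it satisfies the binomial property (Ω over Γ): every ω-cover of X contains a subfamily which is a γ-cover of X. (Gerlits–Nagy) -/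
/-- An ω-cover of `X`: open sets, not containing `X` itself, such that every
finite subset of `X` is contained in some member. -/
def IsOmegaCover {X : Type*} [TopologicalSpace X] (U : Set (Set X)) : Prop :=
  (∀ u ∈ U, IsOpen u) ∧ Set.univ ∉ U ∧ ∀ F : Set X, F.Finite → ∃ u ∈ U, F ⊆ u

/-- A γ-cover of `X`: an infinite family of open sets such that every point
belongs to all but finitely many members. -/
def IsGammaCover {X : Type*} [TopologicalSpace X] (U : Set (Set X)) : Prop :=
  U.Infinite ∧ (∀ u ∈ U, IsOpen u) ∧ ∀ x : X, {u ∈ U | x ∉ u}.Finite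

/-- The selection principle `S₁(Ω,Γ)`. -/
def S1OmegaGamma (X : Type*) [TopologicalSpace X] : Prop :=
  ∀ U : ℕ → Set (Set X), (∀ n, IsOmegaCover (U n)) →
    ∃ V : ℕ → Set X, (∀ n, V n ∈ U n) ∧ IsGammaCover (Set.range V)

/-- `X` is a γ-set: every ω-cover contains a γ-subcover (the property `(Ω over Γ)`). -/
def GammaSet (X : Type*) [TopologicalSpace X] : Prop :=
  ∀ U : Set (Set X), IsOmegaCover U → ∃ V ⊆ U, IsGammaCover V

/-- The selection principle `S₁(Γ,Γ)`. -/
def S1GammaGamma (X : Type*) [TopologicalSpace X] : Prop :=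
  ∀ U : ℕ → Set (Set X), (∀ n, IsGammaCover (U n)) →
    ∃ V : ℕ → Set X, (∀ n, V n ∈ U n) ∧ IsGammaCover (Set.range V)

/-- From any γ-cover we may extract an injective sequence which is still a
γ-sequence: every point lies in all but finitely many terms. -/
lemma exists_injective_gamma_seq {X : Type*} [TopologicalSpace X] {G : Set (Set X)}
    (hG : IsGammaCover G) : ∃ g : ℕ → Set X, Function.Injective g ∧ (∀ k, g k ∈ G) ∧
      ∀ x : X, {k : ℕ | x ∉ g k}.Finite := by
  have e := hG.1.natEmbedding
  refine ⟨fun k => (e k : Set X), ?_, fun k => (e k).2, fun x => ?_⟩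
  · intro a b hab
    exact e.injective (Subtype.ext hab)
  · have hsub : {k : ℕ | x ∉ ((e k : Set X))} ⊆
        (fun k => ((e k : Set X))) ⁻¹' {u ∈ G | x ∉ u} := by
      intro k hk
      exact ⟨(e k).2, hk⟩
    refine Set.Finite.subset (Set.Finite.preimage ?_ (hG.2.2 x)) hsub
    intro a _ b _ h
    exact e.injective (Subtype.ext h)

/-- Gerlits–Nagy: `S₁(Ω,Γ)` is equivalent to the property `(Ω over Γ)`. -/
theorem s1OmegaGamma_iff_gammaSet (X : Type*) [TopologicalSpace X] :
    S1OmegaGamma X ↔ GammaSet X := by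
  constructor
  · -- easy direction: apply `S₁(Ω,Γ)` to the constant sequence of covers
    intro h U hU
    obtain ⟨V, hV, hγ⟩ := h (fun _ => U) (fun _ => hU)
    exact ⟨Set.range V, Set.range_subset_iff.mpr hV, hγ⟩
  · -- hard direction
    intro h U hU
    -- take a γ-subcover of `U 0` and an injective γ-sequence in it
    obtain ⟨G, hGU, hG⟩ := h (U 0) (hU 0)
    obtain ⟨g, ginj, gmem, gtail⟩ := exists_injective_gamma_seq hG
    have gopen : ∀ k, IsOpen (g k) := fun k => (hU 0).1 _ (hGU (gmem k))
    have gne : ∀ k, g k ≠ Set.univ := by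
      intro k hk
      exact (hU 0).2.1 (hk ▸ hGU (gmem k))
    -- the combined cover
    set H : Set (Set X) :=
      {s | ∃ k : ℕ, ∃ u : ℕ → Set X, (∀ i, u i ∈ U i) ∧
        s = g k ∩ ⋂ i ∈ Finset.range (k+1), u i} with hHdef
    have Homega : IsOmegaCover H := by
      refine ⟨?_, ?_, ?_⟩
      · rintro s ⟨k, u, hu, rfl⟩
        exact (gopen k).inter (isOpen_biInter_finset fun i _ => (hU i).1 _ (hu i))
      · rintro ⟨k, u, hu, hs⟩
        exact gne k (Set.univ_subset_iff.mp (hs.le.trans Set.inter_subset_left))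
      · intro F hF
        have hfin : {k : ℕ | ¬ F ⊆ g k}.Finite := by
          refine Set.Finite.subset (Set.Finite.biUnion hF fun x _ => gtail x) ?_
          intro k hk
          obtain ⟨x, hxF, hxk⟩ := Set.not_subset.mp hk
          exact Set.mem_biUnion hxF hxk
        obtain ⟨k, hk⟩ := hfin.infinite_compl.nonempty
        have hFk : F ⊆ g k := not_not.mp hk
        have hpick : ∀ i : ℕ, ∃ u ∈ U i, F ⊆ u := fun i => (hU i).2.2 F hF
        choose u huU huF using hpick
        refine ⟨g k ∩ ⋂ i ∈ Finset.range (k+1), u i, ⟨k, u, huU, rfl⟩, ?_⟩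
        exact Set.subset_inter hFk (Set.subset_iInter₂ fun i _ => huF i)
    -- apply the γ-property to `H`
    obtain ⟨G', hG'H, hG'⟩ := h H Homega
    obtain ⟨s, sinj, smem, stail⟩ := exists_injective_gamma_seq hG'
    have hsH : ∀ j, s j ∈ H := fun j => hG'H (smem j)
    simp only [hHdef, Set.mem_setOf_eq] at hsH
    choose kk uu huuU hsEq using hsH
    -- each level value is taken only finitely often
    have fib : ∀ k, {j : ℕ | kk j = k}.Finite := by
      intro k
      by_contra hinf
      apply gne k
      rw [Set.eq_univ_iff_forall]
      intro x
      have hinf' : {j : ℕ | kk j = k}.Infinite := hinf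
      obtain ⟨j, hj1, hj2⟩ := (hinf'.diff (stail x)).nonempty
      have hx : x ∈ s j := not_not.mp hj2
      rw [hsEq j] at hx
      rw [← hj1]
      exact hx.1
    -- for each `n`, pick `j ≥ n` with `kk j ≥ n`
    have pick : ∀ n : ℕ, ∃ j, n ≤ j ∧ n ≤ kk j := by
      intro n
      have hfin : ({j : ℕ | kk j < n} ∪ {j : ℕ | j < n}).Finite := by
        refine Set.Finite.union ?_ (Set.finite_Iio n)
        refine Set.Finite.subset (Set.Finite.biUnion (Set.finite_Iio n)
          fun k _ => fib k) ?_
        intro j hj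
        exact Set.mem_biUnion hj rfl
      obtain ⟨j, hj⟩ := hfin.infinite_compl.nonempty
      rw [Set.mem_compl_iff, Set.mem_union] at hj
      push_neg at hj
      exact ⟨j, le_of_not_gt hj.2, le_of_not_gt hj.1⟩
    choose jf hjf1 hjf2 using pick
    -- the selection
    refine ⟨fun n => uu (jf n) n, fun n => huuU (jf n) n, ?_⟩
    set V : ℕ → Set X := fun n => uu (jf n) n with hVdef
    have hsV : ∀ n, s (jf n) ⊆ V n := by
      intro n
      rw [hsEq (jf n)]
      refine Set.inter_subset_right.trans ?_
      exact Set.biInter_subset_of_mem (Finset.mem_range.mpr (Nat.lt_succ_of_le (hjf2 n)))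
    have tailV : ∀ x : X, {n : ℕ | x ∉ V n}.Finite := by
      intro x
      obtain ⟨N, hN⟩ := (stail x).bddAbove
      refine Set.Finite.subset (Set.finite_Iic N) ?_
      intro n hn
      have : jf n ∈ {j : ℕ | x ∉ s j} := fun hx => hn (hsV n hx)
      exact le_trans (hjf1 n) (hN this)
    have Vne : ∀ n, V n ≠ Set.univ := by
      intro n hn
      exact (hU n).2.1 (hn ▸ huuU (jf n) n)
    refine ⟨?_, ?_, ?_⟩
    · -- range V is infinite
      intro hfin
      have : Finite ↥(Set.range V) := Set.finite_coe_iff.mpr hfin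
      obtain ⟨u, hu⟩ := Finite.exists_infinite_fiber (Set.rangeFactorization V)
      have hufib : {n : ℕ | V n = (u : Set X)}.Infinite := by
        rw [← Set.infinite_coe_iff]
        have heq : (Set.rangeFactorization V ⁻¹' {u} : Set ℕ)
            = {n : ℕ | V n = (u : Set X)} := by
          ext n
          simp [Set.rangeFactorization, Subtype.ext_iff]
        rw [← heq]
        exact hu
      have huniv : (u : Set X) = Set.univ := by
        rw [Set.eq_univ_iff_forall]
        intro x
        obtain ⟨n, hn1, hn2⟩ := (hufib.diff (tailV x)).nonempty
        have : x ∈ V n := not_not.mp hn2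
        rwa [hn1] at this
      obtain ⟨m, hm⟩ := u.2
      exact Vne m (hm.trans huniv)
    · rintro v ⟨n, rfl⟩
      exact (hU n).1 _ (huuU (jf n) n)
    · intro x
      refine Set.Finite.subset ((tailV x).image V) ?_
      rintro v ⟨⟨n, rfl⟩, hxv⟩
      exact ⟨n, hxv, rfl⟩
end

section
/- The critical cardinality of the γ-set property for subsets of Cantor space equals 𝔭 restricted from above: every subset of Cantor space {0,1}^ℕ of cardinality strictly less than 𝔭 is a γ-set (satisfies S₁(Ω,Γ)). -/
/-- Every ω-cover of a subset of Cantor space has a countable ω-subcover. -/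
lemma exists_countable_omega_subcover (X : Set (ℕ → Bool)) (U : Set (Set X))
    (hU : IsOmegaCover U) : ∃ U' ⊆ U, U'.Countable ∧ IsOmegaCover U' := by
  classical
  let D := Σ n : ℕ, Finset (Fin n → Bool)
  let O : D → Set X := fun d => {x | (fun i : Fin d.1 => x.1 i) ∈ d.2}
  let G : Set D := {d | ∃ u ∈ U, O d ⊆ u}
  let c : D → Set X := fun d => if h : d ∈ G then h.choose else ∅
  have hc : ∀ d ∈ G, c d ∈ U ∧ O d ⊆ c d := by
    intro d hd
    simp only [c, dif_pos hd]
    exact ⟨hd.choose_spec.1, hd.choose_spec.2⟩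
  have hsubU : c '' G ⊆ U := by rintro _ ⟨d, hd, rfl⟩; exact (hc d hd).1
  refine ⟨c '' G, hsubU, (Set.to_countable G).image c, ?_, ?_, ?_⟩
  · intro u hu; exact hU.1 u (hsubU hu)
  · intro hmem; exact hU.2.1 (hsubU hmem)
  · intro F hF
    obtain ⟨u, huU, hFu⟩ := hU.2.2 F hF
    obtain ⟨v, hv, huv⟩ := isOpen_induced_iff.mp (hU.1 u huU)
    have hstep : ∀ x : X, ∃ n : ℕ, x ∈ F → ∀ g : ℕ → Bool,
        (∀ i < n, g i = x.1 i) → g ∈ v := by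
      intro x
      by_cases hx : x ∈ F
      · have hxv : x.1 ∈ v := by
          have : x ∈ u := hFu hx
          rw [← huv] at this; exact this
        obtain ⟨I, w, hw, hIv⟩ := isOpen_pi_iff.mp hv x.1 hxv
        refine ⟨I.sup id + 1, fun _ g hg => hIv ?_⟩
        intro i hi
        have hgi : g i = x.1 i := hg i (Nat.lt_succ_of_le (Finset.le_sup (f := id) hi))
        rw [hgi]; exact (hw i hi).2
      · exact ⟨0, fun hx' => absurd hx' hx⟩
    choose nx hnx using hstep
    let N : ℕ := hF.toFinset.sup nx
    let T : Finset (Fin N → Bool) := hF.toFinset.image (fun x => fun i : Fin N => x.1 i)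
    have hdG : (⟨N, T⟩ : D) ∈ G := by
      refine ⟨u, huU, ?_⟩
      intro y hy
      obtain ⟨x, hxF, hxy⟩ := Finset.mem_image.mp hy
      have hxF' : x ∈ F := hF.mem_toFinset.mp hxF
      have hyv : y.1 ∈ v := by
        refine hnx x hxF' y.1 ?_
        intro i hi
        have hiN : i < N := lt_of_lt_of_le hi (Finset.le_sup hxF)
        exact (congrFun hxy ⟨i, hiN⟩).symm
      rw [← huv]; exact hyv
    refine ⟨c ⟨N, T⟩, ⟨⟨N, T⟩, hdG, rfl⟩, ?_⟩
    intro x hx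
    refine (hc _ hdG).2 ?_
    exact Finset.mem_image_of_mem (fun x : X => fun i : Fin N => x.1 i) (hF.mem_toFinset.mpr hx)

/-- Every subset of Cantor space of cardinality less than `𝔭` is a γ-set. -/
theorem small_subset_cantor_gammaSet (X : Set (ℕ → Bool)) (h : Cardinal.mk X < pNumber) :
    GammaSet X := by
  classical
  intro U hU
  have hXinf : Infinite X := by
    by_contra hfin
    rw [not_infinite_iff_finite] at hfin
    obtain ⟨u, huU, hsub⟩ := hU.2.2 Set.univ Set.finite_univ
    rw [Set.univ_subset_iff] at hsub
    exact hU.2.1 (hsub ▸ huU)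
  obtain ⟨U', hU'U, hU'c, hU'ω⟩ := exists_countable_omega_subcover X U hU
  have hproper : ∀ w : Set X, w ∈ U → ∃ x : X, x ∉ w := by
    intro w hw
    have hne : w ≠ Set.univ := fun e => hU.2.1 (e ▸ hw)
    exact (Set.ne_univ_iff_exists_notMem w).mp hne
  have hU'inf : U'.Infinite := by
    by_contra hfin
    rw [Set.not_infinite] at hfin
    have hne : ∀ w : Set X, ∃ x : X, w ∈ U' → x ∉ w := by
      intro w
      by_cases hw : w ∈ U'
      · obtain ⟨x, hx⟩ := hproper w (hU'U hw)
        exact ⟨x, fun _ => hx⟩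
      · exact ⟨Classical.arbitrary X, fun h' => absurd h' hw⟩
    choose p hp using hne
    obtain ⟨u, huU', hsub⟩ := hU'ω.2.2 (p '' U') (hfin.image p)
    exact hp u huU' (hsub ⟨u, huU', rfl⟩)
  haveI := hU'c.to_subtype
  haveI := hU'inf.to_subtype
  obtain ⟨de⟩ := nonempty_denumerable (↥U')
  let e : ℕ ≃ ↥U' := (@Denumerable.eqv ↥U' de).symm
  let u : ℕ → Set X := fun n => (e n).1
  have huU : ∀ n, u n ∈ U := fun n => hU'U (e n).2
  have huinj : Function.Injective u := fun a b hab => e.injective (Subtype.ext hab)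
  have hcov : ∀ F : Set X, F.Finite → ∃ n, F ⊆ u n := by
    intro F hF
    obtain ⟨w, hw, hFw⟩ := hU'ω.2.2 F hF
    refine ⟨e.symm ⟨w, hw⟩, ?_⟩
    have : u (e.symm ⟨w, hw⟩) = w := congrArg Subtype.val (e.apply_symm_apply ⟨w, hw⟩)
    rw [this]; exact hFw
  let A : Finset X → Set ℕ := fun F => {n | ↑F ⊆ u n}
  have hAinf : ∀ F, (A F).Infinite := by
    intro F
    by_contra hfin
    rw [Set.not_infinite] at hfin
    have hne : ∀ n : ℕ, ∃ x : X, x ∉ u n := fun n => hproper (u n) (huU n)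
    choose p hp using hne
    obtain ⟨n, hFn⟩ := hcov (↑F ∪ p '' (A F)) ((F.finite_toSet).union (hfin.image p))
    have hnA : n ∈ A F := fun x hx => hFn (Or.inl hx)
    exact hp n (hFn (Or.inr ⟨n, hnA, rfl⟩))
  let Fam : Set (Set ℕ) := Set.range A
  have hcard : Cardinal.mk Fam < pNumber := by
    refine lt_of_le_of_lt ?_ h
    calc Cardinal.mk Fam ≤ Cardinal.mk (Finset X) := Cardinal.mk_range_le
    _ = Cardinal.mk X := Cardinal.mk_finset_of_infinite X
  have hP : ∃ S, Pseudointersection S Fam := by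
    by_contra hno
    have hmem : Cardinal.mk ↥Fam ∈ { c | ∃ F : Set (Set ℕ), (∀ B ∈ F, B.Infinite) ∧
        (∀ B ∈ F, ∀ C ∈ F, B ∩ C ∈ F) ∧ (¬ ∃ A, Pseudointersection A F) ∧
        Cardinal.mk F = c } := by
      refine ⟨Fam, ?_, ?_, hno, rfl⟩
      · rintro _ ⟨F, rfl⟩; exact hAinf F
      · rintro _ ⟨F, rfl⟩ _ ⟨G, rfl⟩
        refine ⟨F ∪ G, ?_⟩
        ext n
        simp only [A, Set.mem_setOf_eq, Finset.coe_union, Set.union_subset_iff,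
          Set.mem_inter_iff]
    have : pNumber ≤ Cardinal.mk ↥Fam := csInf_le' hmem
    exact absurd hcard (not_lt.mpr this)
  obtain ⟨S, hSinf, hSsub⟩ := hP
  refine ⟨u '' S, ?_, ?_, ?_, ?_⟩
  · rintro _ ⟨n, _, rfl⟩; exact huU n
  · exact hSinf.image huinj.injOn
  · rintro _ ⟨n, _, rfl⟩; exact hU.1 _ (huU n)
  · intro x
    have hsub2 : {w ∈ u '' S | x ∉ w} ⊆ u '' (S \ A {x}) := by
      rintro _ ⟨⟨n, hn, rfl⟩, hx⟩
      exact ⟨n, ⟨hn, fun hA => hx (hA (by simp))⟩, rfl⟩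
    exact (((hSsub (A {x}) ⟨{x}, rfl⟩).image u).subset hsub2)
end

section
/- If X is a γ-set then X satisfies S₁(Γ,Γ): for every sequence (U_n) of γ-covers of X one can choose V_n ∈ U_n so that {V_n : n ∈ ℕ} is a γ-cover of X. -/
/-- An infinite subset of `ℕ` contains arbitrarily large elements. -/
lemma aux_exists_gt_of_infinite (s : Set ℕ) (hs : s.Infinite) (M : ℕ) : ∃ n ∈ s, M < n := by
  by_contra hc
  push_neg at hc
  exact hs ((Set.finite_Iic M).subset fun n hn => Set.mem_Iic.2 (hc n hn))

/-- Every γ-cover has the ω-cover property: each finite set is contained in a member. -/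
lemma aux_gamma_omega {X : Type*} [TopologicalSpace X] {𝒰 : Set (Set X)}
    (hinf : 𝒰.Infinite) (hpt : ∀ x : X, {u ∈ 𝒰 | x ∉ u}.Finite)
    {F : Set X} (hF : F.Finite) : ∃ u ∈ 𝒰, F ⊆ u := by
  have hbad : {u ∈ 𝒰 | ∃ x ∈ F, x ∉ u}.Finite := by
    refine ((hF.biUnion fun x _ => hpt x).subset ?_)
    rintro u ⟨hu, x, hx, hxu⟩
    exact Set.mem_biUnion hx ⟨hu, hxu⟩
  obtain ⟨u, hu⟩ := (hinf.diff hbad).nonempty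
  refine ⟨u, hu.1, fun x hx => ?_⟩
  by_contra hxu
  exact hu.2 ⟨hu.1, x, hx, hxu⟩

/-- Every γ-set satisfies `S₁(Γ,Γ)`. -/
theorem gammaSet_s1GammaGamma (X : Type*) [TopologicalSpace X] (h : GammaSet X) :
    S1GammaGamma X := by
  classical
  intro U hU
  -- trimmed covers: remove `univ`
  set U' : ℕ → Set (Set X) := fun n => U n \ {Set.univ} with hU'def
  have hU'sub : ∀ n, U' n ⊆ U n := fun n => Set.diff_subset
  have hU'inf : ∀ n, (U' n).Infinite := fun n => ((hU n).1).diff (Set.finite_singleton _)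
  have hU'open : ∀ n, ∀ u ∈ U' n, IsOpen u := fun n u hu => (hU n).2.1 u (hU'sub n hu)
  have hU'pt : ∀ n, ∀ x : X, {u ∈ U' n | x ∉ u}.Finite := fun n x =>
    ((hU n).2.2 x).subset (fun u hu => ⟨hU'sub n hu.1, hu.2⟩)
  have hU'nuniv : ∀ n, Set.univ ∉ U' n := fun n hu => hu.2 rfl
  have homega : ∀ n, ∀ F : Set X, F.Finite → ∃ u ∈ U' n, F ⊆ u :=
    fun n F hF => aux_gamma_omega (hU'inf n) (hU'pt n) hF
  -- a γ-subcover of `U' 0`, enumerated injectively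
  obtain ⟨G0, hG0sub, hG0γ⟩ := h (U' 0) ⟨hU'open 0, hU'nuniv 0, homega 0⟩
  let e : ℕ ↪ G0 := Set.Infinite.natEmbedding _ hG0γ.1
  set g : ℕ → Set X := fun k => (e k : Set X) with hgdef
  have hginj : Function.Injective g := fun a b hab => e.injective (Subtype.ext hab)
  have hgmem : ∀ k, g k ∈ U' 0 := fun k => hG0sub (e k).2
  have hgpt : ∀ x : X, {k | x ∉ g k}.Finite := by
    intro x
    have himg : g '' {k | x ∉ g k} ⊆ {u ∈ G0 | x ∉ u} := by
      rintro u ⟨k, hk, rfl⟩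
      exact ⟨(e k).2, hk⟩
    exact Set.Finite.of_finite_image ((hG0γ.2.2 x).subset himg) hginj.injOn
  -- the combined ω-cover
  set W : Set (Set X) := { w | ∃ (k : ℕ) (u : ℕ → Set X), (∀ n, u n ∈ U' n) ∧
      w = g k ∩ ⋂ n ∈ Finset.Icc 1 k, u n } with hWdef
  have hWomega : IsOmegaCover W := by
    refine ⟨?_, ?_, ?_⟩
    · rintro w ⟨k, u, hu, rfl⟩
      exact (hU'open 0 _ (hgmem k)).inter
        (isOpen_biInter_finset fun n hn => hU'open n _ (hu n))
    · rintro ⟨k, u, hu, heq⟩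
      have h1 : g k ∩ ⋂ n ∈ Finset.Icc 1 k, u n ⊆ g k := Set.inter_subset_left
      rw [← heq] at h1
      exact hU'nuniv 0 ((Set.univ_subset_iff.1 h1) ▸ hgmem k)
    · intro F hF
      obtain ⟨k, hk⟩ : ∃ k, ∀ x ∈ F, x ∈ g k := by
        have hbad : (⋃ x ∈ F, {k | x ∉ g k}).Finite := hF.biUnion fun x _ => hgpt x
        obtain ⟨k, hk⟩ := hbad.infinite_compl.nonempty
        refine ⟨k, fun x hx => ?_⟩
        by_contra hxk
        exact hk (Set.mem_biUnion hx hxk)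
      choose u hu hFu using fun n => homega n F hF
      refine ⟨g k ∩ ⋂ n ∈ Finset.Icc 1 k, u n, ⟨k, u, hu, rfl⟩, fun x hx => ?_⟩
      exact ⟨hk x hx, Set.mem_iInter₂.2 fun n _ => hFu n hx⟩
  -- the γ-subcover of `W`
  obtain ⟨Γ, hΓsub, hΓγ⟩ := h W hWomega
  have hrep : ∀ w ∈ Γ, ∃ (k : ℕ) (u : ℕ → Set X), (∀ n, u n ∈ U' n) ∧
      w = g k ∩ ⋂ n ∈ Finset.Icc 1 k, u n := fun w hw => hΓsub hw
  choose! K uu huu hweq using hrep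
  -- the depth `K` is unbounded on `Γ`
  have hKunb : ∀ j : ℕ, ∃ w ∈ Γ, j ≤ K w := by
    intro j
    by_contra hcon
    push_neg at hcon
    have hcover : Γ ⊆ ⋃ k ∈ Finset.range j, {w ∈ Γ | K w = k} := by
      intro w hw
      exact Set.mem_biUnion (Finset.mem_range.2 (hcon w hw)) ⟨hw, rfl⟩
    have hex : ∃ k ∈ (Finset.range j : Finset ℕ), {w ∈ Γ | K w = k}.Infinite := by
      by_contra hall
      push_neg at hall
      have : Γ.Finite :=
        (Set.Finite.biUnion (Finset.range j).finite_toSet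
          (fun k hk => hall k hk)).subset hcover
      exact hΓγ.1 this
    obtain ⟨k, -, hkinf⟩ := hex
    have hgk : g k = Set.univ := by
      apply Set.eq_univ_of_forall
      intro x
      have hbad : {w ∈ Γ | x ∉ w}.Finite := hΓγ.2.2 x
      obtain ⟨w, hw⟩ := (hkinf.diff hbad).nonempty
      have hwΓ : w ∈ Γ := hw.1.1
      have hxw : x ∈ w := by
        by_contra hxw
        exact hw.2 ⟨hwΓ, hxw⟩
      rw [hweq w hwΓ] at hxw
      rw [← hw.1.2]
      exact hxw.1
    exact hU'nuniv 0 (hgk ▸ hgmem k)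
  choose ws hwsΓ hwsK using hKunb
  -- the selection
  set Vf : ℕ → Set X := fun n => if n = 0 then g 0 else uu (ws n) n with hVfdef
  have hVf0 : Vf 0 = g 0 := by simp [hVfdef]
  have hVfpos : ∀ n, n ≠ 0 → Vf n = uu (ws n) n := by
    intro n hn; simp [hVfdef, hn]
  have hVfmem' : ∀ n, Vf n ∈ U' n := by
    intro n
    by_cases hn : n = 0
    · subst hn; rw [hVf0]; exact hgmem 0
    · rw [hVfpos n hn]; exact huu (ws n) (hwsΓ n) n
  have hVfmem : ∀ n, Vf n ∈ U n := fun n => hU'sub n (hVfmem' n)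
  -- each point is eventually in `Vf n`
  have hkey : ∀ x : X, ∃ M : ℕ, ∀ n, M < n → x ∈ Vf n := by
    intro x
    have hbad : {w ∈ Γ | x ∉ w}.Finite := hΓγ.2.2 x
    obtain ⟨M, hM⟩ := (hbad.image K).bddAbove
    refine ⟨M, fun n hn => ?_⟩
    have hn0 : n ≠ 0 := by omega
    have hxw : x ∈ ws n := by
      by_contra hxw
      have h1 : K (ws n) ≤ M := hM (Set.mem_image_of_mem K ⟨hwsΓ n, hxw⟩)
      have h2 := hwsK n
      omega
    rw [hweq (ws n) (hwsΓ n)] at hxw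
    rw [hVfpos n hn0]
    exact Set.mem_iInter₂.1 hxw.2 n (Finset.mem_Icc.2 ⟨by omega, hwsK n⟩)
  refine ⟨Vf, hVfmem, ?_, ?_, ?_⟩
  · -- infinite range
    intro hfin
    have hex : ∃ A ∈ Set.range Vf, {n | Vf n = A}.Infinite := by
      by_contra hall
      push_neg at hall
      have hsub : (Set.univ : Set ℕ) ⊆ ⋃ A ∈ Set.range Vf, {n | Vf n = A} := fun n _ =>
        Set.mem_biUnion (Set.mem_range_self n) rfl
      exact Set.infinite_univ
        ((Set.Finite.biUnion hfin fun A hA => hall A hA).subset hsub)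
    obtain ⟨A, -, hAinf⟩ := hex
    have hAuniv : A = Set.univ := by
      apply Set.eq_univ_of_forall
      intro x
      obtain ⟨M, hM⟩ := hkey x
      obtain ⟨n, hnA, hn⟩ := aux_exists_gt_of_infinite _ hAinf M
      rw [← hnA]
      exact hM n hn
    obtain ⟨n, hnA, hn⟩ := aux_exists_gt_of_infinite _ hAinf 0
    have hA : A ∈ U' n := hnA ▸ hVfmem' n
    rw [hAuniv] at hA
    exact hU'nuniv n hA
  · -- open
    rintro u ⟨n, rfl⟩
    exact hU'open n _ (hVfmem' n)
  · -- each point misses only finitely many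
    intro x
    obtain ⟨M, hM⟩ := hkey x
    refine ((Set.finite_Iic M).image Vf).subset ?_
    rintro u ⟨⟨n, rfl⟩, hxu⟩
    refine ⟨n, Set.mem_Iic.2 ?_, rfl⟩
    by_contra hc
    exact hxu (hM n (by omega))
end
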